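/- Let Q be a quasigroup. If some principal loop isotope (Q,+) with x + y = R_b⁻¹(x)·L_a⁻¹(y) is a group, then every principal loop isotope of Q is a group. -/

import Mathlib

/-- The principal isotope x + y = R_b⁻¹(x)·L_a⁻¹(y) is a group: there are
inverses `la` of L_a and `ra` of R_b, and the isotope operation is associative. -/
def isGroupIsotope {Q : Type*} (mul : Q → Q → Q) (a b : Q) : Prop :=
  ∃ la ra : Q → Q,
    (∀ x, mul a (la x) = x) ∧ (∀ x, la (mul a x) = x) ∧
    (∀ x, mul (ra x) b = x) ∧ (∀ x, ra (mul x b) = x) ∧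
    (∀ x y z, mul (ra (mul (ra x) (la y))) (la z) = mul (ra x) (la (mul (ra y) (la z))))

/-- In a group-like structure `(add, e)` (associative, two-sided identity,
left translations surjective), if `f`, `g` satisfy the two "unit"
relations at some point `e'`, then `(x, y) ↦ add (f x) (g y)` is associative. -/
theorem isotope_assoc_aux {Q : Type*} (add : Q → Q → Q) (e : Q)
    (assoc : ∀ x y z, add (add x y) z = add x (add y z))
    (he1 : ∀ y, add e y = y) (he2 : ∀ x, add x e = x)
    (hLs : ∀ u, Function.Surjective (add u))
    (f g : Q → Q) (e' : Q)
    (hA : ∀ x, add (f x) (g e') = x)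
    (hB : ∀ y, add (f e') (g y) = y) :
    ∀ x y z, add (f (add (f x) (g y))) (g z) = add (f x) (g (add (f y) (g z))) := by
  have hinv : ∀ u : Q, ∃ u', add u u' = e ∧ add u' u = e := by
    intro u
    obtain ⟨u', hu'⟩ := hLs u e
    obtain ⟨u'', hu''⟩ := hLs u' e
    have key : u'' = u := by
      calc u'' = add e u'' := (he1 _).symm
        _ = add (add u u') u'' := by rw [hu']
        _ = add u (add u' u'') := assoc ..
        _ = add u e := by rw [hu'']
        _ = u := he2 u
    exact ⟨u', hu', key ▸ hu''⟩
  obtain ⟨p, hp1, hp2⟩ := hinv (g e')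
  obtain ⟨q, hq1, hq2⟩ := hinv (f e')
  have hf : ∀ x, f x = add x p := by
    intro x
    have hinj : Function.Injective (fun w => add w (g e')) := by
      intro w1 w2 hw
      simp only at hw
      have h2 : add (add w1 (g e')) p = add (add w2 (g e')) p := by rw [hw]
      rwa [assoc, hp1, he2, assoc, hp1, he2] at h2
    apply hinj
    show add (f x) (g e') = add (add x p) (g e')
    rw [hA, assoc, hp2, he2]
  have hg : ∀ y, g y = add q y := by
    intro y
    have hinj : Function.Injective (add (f e')) := by
      intro w1 w2 hw
      have h2 : add q (add (f e') w1) = add q (add (f e') w2) := by rw [hw]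
      rwa [← assoc, hq2, he1, ← assoc, hq2, he1] at h2
    apply hinj
    show add (f e') (g y) = add (f e') (add q y)
    rw [hB, ← assoc, hq1, he1]
  intro x y z
  simp only [hf, hg, assoc]

/-- If some principal loop isotope of a quasigroup is a group, then every
principal loop isotope is a group. -/
theorem stmt5 {Q : Type*} (mul : Q → Q → Q)
    (hL : ∀ a : Q, Function.Bijective (mul a))
    (hR : ∀ a : Q, Function.Bijective (fun x => mul x a))
    (a b : Q) (h : isGroupIsotope mul a b) :
    ∀ a' b' : Q, isGroupIsotope mul a' b' := by
  obtain ⟨la, ra, h1, h2, h3, h4, h5⟩ := h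
  intro a' b'
  -- inverses of the translations by a' and b'
  let eL : Q ≃ Q := Equiv.ofBijective _ (hL a')
  let eR : Q ≃ Q := Equiv.ofBijective _ (hR b')
  have hla1 : ∀ x, mul a' (eL.symm x) = x := fun x => eL.apply_symm_apply x
  have hla2 : ∀ x, eL.symm (mul a' x) = x := fun x => eL.symm_apply_apply x
  have hra1 : ∀ x, mul (eR.symm x) b' = x := fun x => eR.apply_symm_apply x
  have hra2 : ∀ x, eR.symm (mul x b') = x := fun x => eR.symm_apply_apply x
  refine ⟨eL.symm, eR.symm, hla1, hla2, hra1, hra2, ?_⟩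
  -- identity laws for the reference group `add u v = mul (ra u) (la v)`, unit `mul a b`
  have he1 : ∀ y, mul (ra (mul a b)) (la y) = y := by
    intro y; rw [h4, h1]
  have he2 : ∀ x, mul (ra x) (la (mul a b)) = x := by
    intro x; rw [h2, h3]
  -- decomposition of `mul` through the reference group
  have hdec : ∀ u v, mul u v = mul (ra (mul u b)) (la (mul a v)) := by
    intro u v; rw [h4, h2]
  -- left translations of `add` are surjective
  have hlab : Function.Bijective la :=
    Function.bijective_iff_has_inverse.mpr ⟨mul a, fun x => h1 x, fun x => h2 x⟩
  have hLs : ∀ u, Function.Surjective (fun y => mul (ra u) (la y)) := fun u =>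
    ((hL (ra u)).comp hlab).surjective
  -- unit relations for the new isotope inside the reference group:
  -- with f x = mul (eR.symm x) b and g y = mul a (eL.symm y),
  -- add (f x) (g (mul a' b')) = x and add (f (mul a' b')) (g y) = y.
  have hA : ∀ x, mul (ra (mul (eR.symm x) b)) (la (mul a (eL.symm (mul a' b')))) = x := by
    intro x
    rw [← hdec, hla2, hra1]
  have hB : ∀ y, mul (ra (mul (eR.symm (mul a' b')) b)) (la (mul a (eL.symm y))) = y := by
    intro y
    rw [← hdec, hra2, hla1]
  have key := isotope_assoc_aux (fun u v => mul (ra u) (la v)) (mul a b) h5 he1 he2 hLs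
    (fun x => mul (eR.symm x) b) (fun y => mul a (eL.symm y)) (mul a' b') hA hB
  intro x y z
  have hk := key x y z
  simp only [← hdec] at hk
  exact hk
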